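/- For every prime p : ℕ, there exist x y : ℤ with x^2 + 3*x*y + y^2 = p if and only if p = 5 or p % 5 = 1 or p % 5 = 4. (Equivalently: a positive prime p is of the form 5n ± 1 exactly when p is irregular and non-special in ℤ[i₃], while p = 5 is the positive special prime.) -/
import Mathlib

lemma sqmod4 (X : ℤ) : (X^2 % 4 = 0 ∧ X % 2 = 0) ∨ (X^2 % 4 = 1 ∧ X % 2 = 1) := by
  rcases Int.even_or_odd X with ⟨c, rfl⟩ | ⟨c, rfl⟩
  · left
    refine ⟨?_, by omega⟩
    have h : (c+c)^2 = 4*(c*c) := by ring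
    rw [h]
    exact Int.mul_emod_right 4 _
  · right
    refine ⟨?_, by omega⟩
    have h : (2*c+1)^2 = 1 + (c*c+c)*4 := by ring
    rw [h]
    simp [Int.add_mul_emod_self_right]

lemma sqmod3 (X : ℤ) : (X % 3 = 0 ∧ X^2 % 3 = 0) ∨ X^2 % 3 = 1 := by
  obtain ⟨q, hq⟩ : ∃ q, X = 3*q + X % 3 := ⟨X/3, by omega⟩
  have h : X % 3 = 0 ∨ X % 3 = 1 ∨ X % 3 = 2 := by omega
  rcases h with h|h|h <;> rw [h] at hq
  · left
    refine ⟨h, ?_⟩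
    rw [hq]
    have h2 : (3*q+0)^2 = 3*(3*q*q) := by ring
    rw [h2]
    exact Int.mul_emod_right 3 _
  · right
    rw [hq]
    have h2 : (3*q+1)^2 = 1 + (3*q*q+2*q)*3 := by ring
    rw [h2]
    simp [Int.add_mul_emod_self_right]
  · right
    rw [hq]
    have h2 : (3*q+2)^2 = 1 + (3*q*q+4*q+1)*3 := by ring
    rw [h2]
    simp [Int.add_mul_emod_self_right]

lemma aux5 (a b : ℕ) (hb : b ≠ 0) : a^2 ≠ 5*b^2 := by
  intro h
  have hb2 : 0 < b^2 := Nat.pos_of_ne_zero (pow_ne_zero _ hb)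
  have ha : a ≠ 0 := by rintro rfl; rw [zero_pow (by norm_num)] at h; omega
  have h1 : (a^2).factorization 5 = 2 * a.factorization 5 := by
    rw [Nat.factorization_pow]; simp
  have h2 : (5*b^2).factorization 5 = 1 + 2 * b.factorization 5 := by
    rw [Nat.factorization_mul (by norm_num) (pow_ne_zero _ hb), Nat.factorization_pow]
    simp [Nat.Prime.factorization (by norm_num : Nat.Prime 5)]
  rw [h, h2] at h1
  omega

lemma final_step (p : ℕ) (u v : ℤ) (hpar : u % 2 = v % 2) (h : u^2 - 5*v^2 = -4*(p:ℤ)) :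
    ∃ x y : ℤ, x ^ 2 + 3 * x * y + y ^ 2 = (p : ℤ) := by
  obtain ⟨s, hs⟩ : ∃ s, u - v = 2*s := ⟨(u-v)/2, by omega⟩
  obtain ⟨t, ht⟩ : ∃ t, u + v = 2*t := ⟨(u+v)/2, by omega⟩
  have hu : u = s + t := by omega
  have hv : v = t - s := by omega
  subst hu
  subst hv
  refine ⟨s, -t, ?_⟩
  have h4 : (4:ℤ) * (s^2 + 3*(s*(-t)) + (-t)^2) = 4*(p:ℤ) := by linear_combination -h
  linarith

set_option maxHeartbeats 1600000 in
lemma key (p : ℕ) (hp : p.Prime) (h5 : p % 5 = 1 ∨ p % 5 = 4) :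
    ∃ x y : ℤ, x ^ 2 + 3 * x * y + y ^ 2 = (p : ℤ) := by
  haveI : Fact p.Prime := ⟨hp⟩
  haveI : Fact (Nat.Prime 5) := ⟨by norm_num⟩
  have hp2 : p ≠ 2 := by rintro rfl; omega
  have hp5 : p ≠ 5 := by rintro rfl; omega
  have hpodd : p % 2 = 1 := hp.eq_two_or_odd.resolve_left hp2
  have hppos : (0:ℤ) < p := by exact_mod_cast hp.pos
  -- 5 is a square mod p
  have h5z : ((((5:ℕ)):ℤ) : ZMod p) ≠ 0 := by
    rw [Ne, ZMod.intCast_zmod_eq_zero_iff_dvd]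
    intro hdvd
    have hd : p ∣ 5 := by exact_mod_cast hdvd
    exact hp5 ((Nat.prime_dvd_prime_iff_eq hp (by norm_num)).mp hd)
  have hpz : ((p:ℤ) : ZMod 5) ≠ 0 := by
    rw [Ne, ZMod.intCast_zmod_eq_zero_iff_dvd]
    intro hdvd
    have hd : (5:ℕ) ∣ p := by exact_mod_cast hdvd
    omega
  have hPsq : IsSquare ((p:ℤ) : ZMod 5) := by
    have e : ((p:ℤ) : ZMod 5) = ((p % 5 : ℕ) : ZMod 5) := by
      rw [ZMod.natCast_mod]; push_cast; ring
    rcases h5 with h|h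
    · rw [e, h]; exact ⟨(1 : ZMod 5), by norm_num⟩
    · rw [e, h]; exact ⟨(2 : ZMod 5), by norm_num⟩
  have l1 : legendreSym 5 p = 1 := (legendreSym.eq_one_iff 5 hpz).mpr hPsq
  have qr := legendreSym.quadratic_reciprocity_one_mod_four (p := 5) (q := p) (by norm_num) hp2
  have l2 : legendreSym p ((5:ℕ):ℤ) = 1 := by rw [qr]; exact l1
  obtain ⟨a, ha⟩ := (legendreSym.eq_one_iff p h5z).mp l2
  have ha' : (5 : ZMod p) = a * a := by push_cast at ha; exact ha
  -- Thue's lemma via pigeonhole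
  set n := p.sqrt with hn
  have hnlt : n^2 < p := by
    have h1 : n^2 ≤ p := Nat.sqrt_le' p
    rcases eq_or_lt_of_le h1 with heq|h
    · exfalso
      rcases hp.eq_one_or_self_of_dvd n ⟨n, by rw [← heq]; ring⟩ with h1'|h1'
      · rw [h1'] at heq; have := hp.two_le; omega
      · rw [h1'] at heq; have := hp.two_le; nlinarith
    · exact h
  have hlt2 : p < (n+1)^2 := Nat.lt_succ_sqrt' p
  have hcard : Fintype.card (ZMod p) < Fintype.card (Fin (n+1) × Fin (n+1)) := by
    rw [ZMod.card, Fintype.card_prod, Fintype.card_fin]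
    nlinarith [hlt2]
  obtain ⟨t1, t2, hne, heq⟩ := Fintype.exists_ne_map_eq_of_card_lt
    (fun t : Fin (n+1) × Fin (n+1) =>
      ((t.1.val : ZMod p) + a * (t.2.val : ZMod p))) hcard
  have heq' : ((t1.1.val : ZMod p) + a * (t1.2.val : ZMod p))
      = ((t2.1.val : ZMod p) + a * (t2.2.val : ZMod p)) := heq
  obtain ⟨X, hXdef⟩ : ∃ X : ℤ, X = (t1.1.val : ℤ) - (t2.1.val : ℤ) := ⟨_, rfl⟩
  obtain ⟨Y, hYdef⟩ : ∃ Y : ℤ, Y = (t2.2.val : ℤ) - (t1.2.val : ℤ) := ⟨_, rfl⟩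
  have h0 : ((X^2 - 5*Y^2 : ℤ) : ZMod p) = 0 := by
    rw [hXdef, hYdef]
    push_cast
    linear_combination (((t1.1.val : ZMod p) - (t2.1.val : ZMod p))
        + a * ((t2.2.val : ZMod p) - (t1.2.val : ZMod p))) * heq'
      - ((t2.2.val : ZMod p) - (t1.2.val : ZMod p))^2 * ha'
  obtain ⟨k, hk⟩ := (ZMod.intCast_zmod_eq_zero_iff_dvd _ p).mp h0
  -- bounds
  have b11 : t1.1.val < n + 1 := t1.1.isLt
  have b12 : t1.2.val < n + 1 := t1.2.isLt
  have b21 : t2.1.val < n + 1 := t2.1.isLt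
  have b22 : t2.2.val < n + 1 := t2.2.isLt
  have hXb : X^2 ≤ (n:ℤ)^2 := by
    have h1 : -(n:ℤ) ≤ X := by omega
    have h2 : X ≤ (n:ℤ) := by omega
    nlinarith [mul_nonneg (by linarith : (0:ℤ) ≤ (n:ℤ) - X) (by linarith : (0:ℤ) ≤ (n:ℤ) + X)]
  have hYb : Y^2 ≤ (n:ℤ)^2 := by
    have h1 : -(n:ℤ) ≤ Y := by omega
    have h2 : Y ≤ (n:ℤ) := by omega
    nlinarith [mul_nonneg (by linarith : (0:ℤ) ≤ (n:ℤ) - Y) (by linarith : (0:ℤ) ≤ (n:ℤ) + Y)]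
  have hpn : ((n:ℤ))^2 < (p:ℤ) := by exact_mod_cast hnlt
  have hk1 : k ≤ 0 := by
    have h1 : (p:ℤ)*k < (p:ℤ)*1 := by linarith [sq_nonneg Y, hXb, hpn, hk]
    have h2 : k < 1 := lt_of_mul_lt_mul_left h1 (le_of_lt hppos)
    omega
  have hk2 : -4 ≤ k := by
    have h1 : (p:ℤ)*(-5) < (p:ℤ)*k := by linarith [sq_nonneg X, hYb, hpn, hk]
    have h2 : -5 < k := lt_of_mul_lt_mul_left h1 (le_of_lt hppos)
    omega
  have hne' : ¬(X = 0 ∧ Y = 0) := by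
    rintro ⟨hX0, hY0⟩
    apply hne
    have e1 : t1.1 = t2.1 := by apply Fin.ext; omega
    have e2 : t1.2 = t2.2 := by apply Fin.ext; omega
    exact Prod.ext e1 e2
  interval_cases k
  · -- k = -4
    refine final_step p X Y ?_ (by linear_combination hk)
    rcases sqmod4 X with ⟨hA, hX2⟩|⟨hA, hX2⟩ <;> rcases sqmod4 Y with ⟨hB, hY2⟩|⟨hB, hY2⟩ <;>
      rw [hX2, hY2] <;>
      first
      | rfl
      | (exfalso
         obtain ⟨A, hA'⟩ : ∃ A:ℤ, A = X^2 := ⟨_, rfl⟩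
         obtain ⟨B, hB'⟩ : ∃ B:ℤ, B = Y^2 := ⟨_, rfl⟩
         rw [← hA'] at hk hA
         rw [← hB'] at hk hB
         omega)
  · -- k = -3 : impossible
    exfalso
    rcases sqmod3 X with ⟨hX3, hA⟩|hA
    · rcases sqmod3 Y with ⟨hY3, hB⟩|hB
      · obtain ⟨x', rfl⟩ : (3:ℤ) ∣ X := Int.dvd_of_emod_eq_zero hX3
        obtain ⟨y', rfl⟩ : (3:ℤ) ∣ Y := Int.dvd_of_emod_eq_zero hY3
        have h3p : ((3:ℕ):ℤ) ∣ (p:ℤ) := ⟨5*y'^2 - x'^2, by push_cast; linarith [hk]⟩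
        have h3p' : (3:ℕ) ∣ p := by exact_mod_cast h3p
        have := (Nat.prime_dvd_prime_iff_eq (by norm_num) hp).mp h3p'
        omega
      · obtain ⟨A, hA'⟩ : ∃ A:ℤ, A = X^2 := ⟨_, rfl⟩
        obtain ⟨B, hB'⟩ : ∃ B:ℤ, B = Y^2 := ⟨_, rfl⟩
        rw [← hA'] at hk hA
        rw [← hB'] at hk hB
        omega
    · rcases sqmod3 Y with ⟨hY3, hB⟩|hB <;>
        (obtain ⟨A, hA'⟩ : ∃ A:ℤ, A = X^2 := ⟨_, rfl⟩
         obtain ⟨B, hB'⟩ : ∃ B:ℤ, B = Y^2 := ⟨_, rfl⟩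
         rw [← hA'] at hk hA
         rw [← hB'] at hk hB
         omega)
  · -- k = -2 : impossible
    exfalso
    rcases sqmod4 X with ⟨hA, hX2⟩|⟨hA, hX2⟩ <;> rcases sqmod4 Y with ⟨hB, hY2⟩|⟨hB, hY2⟩ <;>
      (obtain ⟨A, hA'⟩ : ∃ A:ℤ, A = X^2 := ⟨_, rfl⟩
       obtain ⟨B, hB'⟩ : ∃ B:ℤ, B = Y^2 := ⟨_, rfl⟩
       rw [← hA'] at hk hA
       rw [← hB'] at hk hB
       omega)
  · -- k = -1
    exact final_step p (2*X) (2*Y) (by omega) (by linear_combination 4*hk)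
  · -- k = 0 : impossible
    exfalso
    have e : X^2 = 5 * Y^2 := by linear_combination hk
    by_cases hY0 : Y = 0
    · rw [hY0] at e
      have hX0 : X = 0 := by
        have h0' : X^2 = 0 := by simpa using e
        exact (pow_eq_zero_iff two_ne_zero).mp h0'
      exact hne' ⟨hX0, hY0⟩
    · have h1 : (X.natAbs:ℤ)^2 = X^2 := by rw [Int.natCast_natAbs]; exact sq_abs X
      have h2 : (Y.natAbs:ℤ)^2 = Y^2 := by rw [Int.natCast_natAbs]; exact sq_abs Y
      have h3 : (X.natAbs:ℤ)^2 = 5*(Y.natAbs:ℤ)^2 := by rw [h1, h2]; exact e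
      have h4 : X.natAbs^2 = 5*Y.natAbs^2 := by exact_mod_cast h3
      exact aux5 _ _ (fun hh => hY0 (Int.natAbs_eq_zero.mp hh)) h4

theorem stmt17 (p : ℕ) (hp : p.Prime) :
    (∃ x y : ℤ, x ^ 2 + 3 * x * y + y ^ 2 = (p : ℤ)) ↔
      (p = 5 ∨ p % 5 = 1 ∨ p % 5 = 4) := by
  constructor
  · rintro ⟨x, y, hxy⟩
    have h50 : (5 : ZMod 5) = 0 := by decide
    have hc := congrArg (fun z : ℤ => (z : ZMod 5)) hxy
    push_cast at hc
    have h5 : ((x : ZMod 5) - (y : ZMod 5))^2 = (p : ZMod 5) := by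
      linear_combination hc - (x : ZMod 5)*(y : ZMod 5)*h50
    have hsqs : ∀ z : ZMod 5, z^2 = 0 ∨ z^2 = 1 ∨ z^2 = 4 := by decide
    have hP : (p : ZMod 5) = 0 ∨ (p : ZMod 5) = 1 ∨ (p : ZMod 5) = 4 := h5 ▸ hsqs _
    have e : (p : ZMod 5) = ((p % 5 : ℕ) : ZMod 5) := (ZMod.natCast_mod p 5).symm
    have hm : p % 5 = 0 ∨ p % 5 = 1 ∨ p % 5 = 2 ∨ p % 5 = 3 ∨ p % 5 = 4 := by omega
    rcases hm with h|h|h|h|h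
    · left
      have hd : (5:ℕ) ∣ p := Nat.dvd_of_mod_eq_zero h
      exact ((Nat.prime_dvd_prime_iff_eq (by norm_num) hp).mp hd).symm
    · right; left; exact h
    · exfalso; rw [e, h] at hP; revert hP; decide
    · exfalso; rw [e, h] at hP; revert hP; decide
    · right; right; exact h
  · rintro (rfl | h | h)
    · exact ⟨1, 1, by norm_num⟩
    · exact key p hp (Or.inl h)
    · exact key p hp (Or.inr h)
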